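/- For n ≥ 2, in the multiplicative semigroup A^+(B_n) (whose elements are the constant maps ξ_c for c ∈ B_n, the n-support maps (p,q;σ) for p,q ∈ [n] and σ ∈ S_n, and the singleton-support maps sending (k,l) to (p,q) and all else to θ), if f = g_1 g_2 ⋯ g_k is a product of non-θ-constant elements and f is an n-support map, then every g_i is an n-support map; conversely, a product of n-support maps is either the constant θ map or an n-support map. -/

import Mathlib

def Bn (n : ℕ) : Type := Option (Fin n × Fin n)

def Bn.mul {n : ℕ} : Bn n → Bn n → Bn n
  | some (i, j), some (k, l) => if j = k then some (i, l) else none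
  | _, _ => none

instance (n : ℕ) : Mul (Bn n) := ⟨Bn.mul⟩

instance (n : ℕ) : Semigroup (Bn n) where
  mul_assoc a b c := by
    show Bn.mul (Bn.mul a b) c = Bn.mul a (Bn.mul b c)
    have e1 : ∀ x : Bn n, Bn.mul x none = none := by intro x; rcases x with _ | ⟨_, _⟩ <;> rfl
    have e2 : ∀ i j k l : Fin n, Bn.mul (some (i, j)) (some (k, l)) =
        if j = k then some (i, l) else none := fun _ _ _ _ => rfl
    have e3 : ∀ x : Bn n, Bn.mul none x = none := fun _ => rfl
    rcases a with _ | ⟨i, j⟩ <;> rcases b with _ | ⟨k, l⟩ <;> rcases c with _ | ⟨p, q⟩ <;>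
      try rfl
    · erw [e1, e1]
    · erw [e2, e2]
      by_cases h1 : j = k <;> by_cases h2 : l = p
      · erw [if_pos h1, if_pos h2, e2, e2, if_pos h2, if_pos h1]
      · erw [if_pos h1, if_neg h2, e2, e1, if_neg h2]
      · erw [if_neg h1, if_pos h2, e3, e2, if_neg h1]
      · erw [if_neg h1, if_neg h2, e3]

/-- Maps on `Bn n`, composed left-to-right: `x (f * g) = (x f) g`. -/
def MapBn (n : ℕ) : Type := Bn n → Bn n

instance (n : ℕ) : Monoid (MapBn n) where
  mul f g := fun x => g (f x)
  one := fun x => x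
  mul_assoc _ _ _ := rfl
  one_mul _ := rfl
  mul_one _ := rfl

/-- The constant map `ξ_c`. -/
def constMap (n : ℕ) (c : Bn n) : MapBn n := fun _ => c

/-- The `n`-support map `(p, q; σ)`, sending `(i, p) ↦ (iσ, q)` and all else to `θ`. -/
def nSuppMap (n : ℕ) (p q : Fin n) (σ : Equiv.Perm (Fin n)) : MapBn n :=
  fun x =>
    match x with
    | some (i, j) => if j = p then some (σ i, q) else none
    | none => none

instance (n : ℕ) : DecidableEq (Bn n) :=
  inferInstanceAs (DecidableEq (Option (Fin n × Fin n)))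

/-- The singleton-support map `((k,l) → (p,q))`. -/
def sglMap (n : ℕ) (k l p q : Fin n) : MapBn n :=
  fun x => @ite _ (x = some (k, l)) (instDecidableEqBn n x (some (k, l))) (some (p, q)) none

/-- The multiplicative semigroup reduct `A⁺(Bₙ)`, as a set of maps on `Bn n`. -/
def APlus (n : ℕ) : Set (MapBn n) :=
  {f | (∃ c, f = constMap n c) ∨ (∃ p q σ, f = nSuppMap n p q σ) ∨
       (∃ k l p q, f = sglMap n k l p q)}

/-- Independence of a subset of a semigroup. -/
def IndependentIn {S : Type*} [Semigroup S] (U : Set S) : Prop :=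
  ∀ a ∈ U, a ∉ Subsemigroup.closure (U \ {a})

-- auxiliary
namespace Nsp

variable {n : ℕ}

lemma mul_apply (f g : MapBn n) (x : Bn n) : (f * g) x = g (f x) := rfl

def Small (n : ℕ) (f : MapBn n) : Prop :=
  f none = none ∧ ∀ x y, f x ≠ none → f y ≠ none → x = y

def Tri (n : ℕ) (f : MapBn n) : Prop :=
  (∃ c, f = constMap n c) ∨ (∃ p q σ, f = nSuppMap n p q σ) ∨ Small n f

def P (n : ℕ) (f : MapBn n) : Prop :=
  ∃ x y, f x ≠ none ∧ f y ≠ none ∧ f x ≠ f y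

lemma nSupp_none (p q : Fin n) (σ : Equiv.Perm (Fin n)) :
    nSuppMap n p q σ none = none := rfl

lemma nSupp_some (p q : Fin n) (σ : Equiv.Perm (Fin n)) (i j : Fin n) :
    nSuppMap n p q σ (some (i, j)) = if j = p then some (σ i, q) else none := rfl

lemma nSupp_inj (p q : Fin n) (σ : Equiv.Perm (Fin n)) (x y : Bn n)
    (hx : nSuppMap n p q σ x ≠ none) (hxy : nSuppMap n p q σ x = nSuppMap n p q σ y) :
    x = y := by
  rcases x with _ | ⟨i, j⟩
  · exact absurd rfl hx
  · rcases y with _ | ⟨i', j'⟩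
    · rw [nSupp_none] at hxy; exact absurd hxy hx
    · simp only [nSupp_some] at hxy hx
      split_ifs at hxy hx with h1 h2 <;> simp_all
      injection hxy with h3
      rw [σ.injective (congrArg Prod.fst h3)]

lemma sgl_small (k l p q : Fin n) : Small n (sglMap n k l p q) := by
  constructor
  · simp [sglMap]; rfl
  · intro x y hx hy
    simp only [sglMap] at hx hy
    by_cases h1 : x = some (k, l) <;> by_cases h2 : y = some (k, l)
    · rw [h1, h2]
    · exact (hy (if_neg h2)).elim
    · exact (hx (if_neg h1)).elim
    · exact (hx (if_neg h1)).elim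

lemma tri_mul (a b : MapBn n) (ha : a ∈ APlus n) (hb : Tri n b) : Tri n (a * b) := by
  rcases ha with ⟨c, rfl⟩ | ⟨p, q, σ, rfl⟩ | ⟨k, l, p, q, rfl⟩
  · exact Or.inl ⟨b c, rfl⟩
  · rcases hb with ⟨c, rfl⟩ | ⟨p', q', σ', rfl⟩ | ⟨h0, h1⟩
    · exact Or.inl ⟨c, rfl⟩
    · by_cases hq : q = p'
      · refine Or.inr (Or.inl ⟨p, q', σ.trans σ', ?_⟩)
        funext x
        rcases x with _ | ⟨i, j⟩
        · rfl
        · show nSuppMap n p' q' σ' (nSuppMap n p q σ (some (i, j))) = _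
          simp only [nSupp_some]
          split_ifs with h <;> simp [nSupp_some, nSupp_none, hq, h] <;> rfl
      · refine Or.inl ⟨none, ?_⟩
        funext x
        rcases x with _ | ⟨i, j⟩
        · rfl
        · show nSuppMap n p' q' σ' (nSuppMap n p q σ (some (i, j))) = constMap n none (some (i, j))
          simp only [nSupp_some, constMap]
          split_ifs with h <;> simp [nSupp_some, nSupp_none, hq, h] <;> rfl
    · refine Or.inr (Or.inr ⟨?_, ?_⟩)
      · show b (nSuppMap n p q σ none) = none
        rw [nSupp_none, h0]
      · intro x y hx hy
        rw [mul_apply] at hx hy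
        have hx' : nSuppMap n p q σ x ≠ none := fun h => hx (h ▸ h0)
        have hy' : nSuppMap n p q σ y ≠ none := fun h => hy (h ▸ h0)
        exact nSupp_inj p q σ x y hx' (h1 _ _ hx hy)
  · rcases hb with ⟨c, rfl⟩ | hb
    · exact Or.inl ⟨c, rfl⟩
    · have hb0 : b none = none := by
        rcases hb with ⟨p', q', σ', rfl⟩ | ⟨h0, _⟩
        · rfl
        · exact h0
      refine Or.inr (Or.inr ⟨?_, ?_⟩)
      · show b (sglMap n k l p q none) = none
        have : sglMap n k l p q none = none := by simp [sglMap]; rfl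
        rw [this, hb0]
      · intro x y hx hy
        rw [mul_apply] at hx hy
        have hx' : sglMap n k l p q x ≠ none := fun h => hx (h ▸ hb0)
        have hy' : sglMap n k l p q y ≠ none := fun h => hy (h ▸ hb0)
        simp only [sglMap] at hx' hy'
        by_cases h1 : x = some (k, l) <;> by_cases h2 : y = some (k, l)
        · rw [h1, h2]
        · exact (hy' (if_neg h2)).elim
        · exact (hx' (if_neg h1)).elim
        · exact (hx' (if_neg h1)).elim

lemma tri_prod (l : List (MapBn n)) (h : ∀ g ∈ l, g ∈ APlus n) : l = [] ∨ Tri n l.prod := by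
  induction l with
  | nil => exact Or.inl rfl
  | cons a t ih =>
    refine Or.inr ?_
    have ha : a ∈ APlus n := h a (List.mem_cons_self)
    rcases ih (fun g hg => h g (List.mem_cons_of_mem a hg)) with rfl | ht
    · simp only [List.prod_cons, List.prod_nil, mul_one]
      rcases ha with ⟨c, rfl⟩ | ⟨p, q, σ, rfl⟩ | ⟨k, l', p, q, rfl⟩
      · exact Or.inl ⟨c, rfl⟩
      · exact Or.inr (Or.inl ⟨p, q, σ, rfl⟩)
      · exact Or.inr (Or.inr (sgl_small k l' p q))
    · rw [List.prod_cons]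
      exact tri_mul a t.prod ha ht

lemma P_of_nSupp (hn : 2 ≤ n) (p q : Fin n) (σ : Equiv.Perm (Fin n)) :
    P n (nSuppMap n p q σ) := by
  have h0 : (0 : ℕ) < n := by omega
  have h1 : (1 : ℕ) < n := by omega
  refine ⟨some (⟨0, h0⟩, p), some (⟨1, h1⟩, p), ?_, ?_, ?_⟩ <;>
    rw [nSupp_some] <;> try rw [nSupp_some]
  · simp only [if_pos rfl]; exact Option.some_ne_none _
  · simp only [if_pos rfl]; exact Option.some_ne_none _
  · simp only [if_pos rfl]
    intro h
    have h' : σ ⟨0, h0⟩ = σ ⟨1, h1⟩ := by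
      have h2 : (some (σ ⟨0, h0⟩, q) : Option (Fin n × Fin n)) = some (σ ⟨1, h1⟩, q) := h
      exact Prod.mk.injEq _ _ _ _ ▸ (Option.some.injEq _ _ ▸ h2) |>.1
    have := σ.injective h'
    simp [Fin.mk.injEq] at this

lemma not_P_const (c : Bn n) : ¬ P n (constMap n c) := by
  rintro ⟨x, y, _, _, hxy⟩
  exact hxy rfl

lemma P_mul_right (f g : MapBn n) (h : P n (f * g)) : P n g := by
  obtain ⟨x, y, hx, hy, hxy⟩ := h
  exact ⟨f x, f y, hx, hy, hxy⟩

end Nsp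

namespace Nsp
variable {n : ℕ}

lemma ns_mul_ns_eq (p q p' q' : Fin n) (σ σ' : Equiv.Perm (Fin n)) (hq : q = p') :
    nSuppMap n p q σ * nSuppMap n p' q' σ' = nSuppMap n p q' (σ.trans σ') := by
  funext x
  rcases x with _ | ⟨i, j⟩
  · rfl
  · show nSuppMap n p' q' σ' (nSuppMap n p q σ (some (i, j))) = _
    simp only [nSupp_some]
    split_ifs with h <;> simp [nSupp_some, nSupp_none, hq, h] <;> rfl

lemma ns_mul_ns_ne (p q p' q' : Fin n) (σ σ' : Equiv.Perm (Fin n)) (hq : q ≠ p') :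
    nSuppMap n p q σ * nSuppMap n p' q' σ' = constMap n none := by
  funext x
  rcases x with _ | ⟨i, j⟩
  · rfl
  · show nSuppMap n p' q' σ' (nSuppMap n p q σ (some (i, j))) = constMap n none (some (i, j))
    simp only [nSupp_some, constMap]
    split_ifs with h <;> simp [nSupp_some, nSupp_none, hq, h] <;> rfl

lemma prod_nSupp (l : List (MapBn n)) : l ≠ [] →
    (∀ g ∈ l, ∃ p q σ, g = nSuppMap n p q σ) →
    l.prod = constMap n none ∨ ∃ p q σ, l.prod = nSuppMap n p q σ := by
  induction l with
  | nil => intro hl _; exact absurd rfl hl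
  | cons a t ih =>
    intro _ h
    obtain ⟨p, q, σ, rfl⟩ := h a (List.mem_cons_self)
    rcases eq_or_ne t [] with rfl | ht
    · exact Or.inr ⟨p, q, σ, by simp⟩
    · rcases ih ht (fun g hg => h g (List.mem_cons_of_mem _ hg)) with hc | ⟨p', q', σ', hns⟩
      · left
        rw [List.prod_cons, hc]
        funext x; rfl
      · rw [List.prod_cons, hns]
        by_cases hq : q = p'
        · exact Or.inr ⟨p, q', σ.trans σ', ns_mul_ns_eq p q p' q' σ σ' hq⟩
        · exact Or.inl (ns_mul_ns_ne p q p' q' σ σ' hq)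

end Nsp

theorem nSupp_products (n : ℕ) (hn : 2 ≤ n) (l : List (MapBn n)) (hl : l ≠ [])
    (hmem : ∀ g ∈ l, g ∈ APlus n ∧ g ≠ constMap n none) :
    ((∃ p q σ, l.prod = nSuppMap n p q σ) → ∀ g ∈ l, ∃ p q σ, g = nSuppMap n p q σ) ∧
    ((∀ g ∈ l, ∃ p q σ, g = nSuppMap n p q σ) →
      l.prod = constMap n none ∨ ∃ p q σ, l.prod = nSuppMap n p q σ) := by
  refine ⟨?_, Nsp.prod_nSupp l hl⟩
  rintro ⟨p, q, σ, hprod⟩ g hg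
  obtain ⟨l1, l2, rfl⟩ := List.append_of_mem hg
  have hP : Nsp.P n ((l1 ++ g :: l2).prod) := by
    rw [hprod]; exact Nsp.P_of_nSupp hn p q σ
  rw [List.prod_append, List.prod_cons] at hP
  have hP2 : Nsp.P n (g * l2.prod) := Nsp.P_mul_right _ _ hP
  have hgmem := hmem g (by simp)
  rcases hgmem.1 with ⟨c, rfl⟩ | hns | ⟨k, l', p', q', rfl⟩
  · exfalso
    have hc : constMap n c * l2.prod = constMap n (l2.prod c) := rfl
    exact Nsp.not_P_const _ (hc ▸ hP2)
  · exact hns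
  · exfalso
    have hb : (∃ c, l2.prod = constMap n c) ∨ l2.prod none = none := by
      rcases Nsp.tri_prod l2 (fun g hg => (hmem g (by simp [hg])).1) with rfl | ht
      · exact Or.inr rfl
      · rcases ht with hc | ⟨p'', q'', σ'', hns'⟩ | ⟨h0, _⟩
        · exact Or.inl hc
        · exact Or.inr (by rw [hns']; rfl)
        · exact Or.inr h0
    obtain ⟨x, y, hx, hy, hxy⟩ := hP2
    rcases hb with ⟨c, hc⟩ | h0
    · exact hxy (by rw [Nsp.mul_apply, Nsp.mul_apply, hc]; rfl)
    · rw [Nsp.mul_apply] at hx hy hxy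
      have hx1 : x = some (k, l') := by
        by_contra hne
        exact hx (by rw [show sglMap n k l' p' q' x = none from if_neg hne, h0])
      have hy1 : y = some (k, l') := by
        by_contra hne
        exact hy (by rw [show sglMap n k l' p' q' y = none from if_neg hne, h0])
      exact hxy (by rw [hx1, hy1]; rfl)
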